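/- Let G be a finite simple graph with γ_{t2}(G) ≥ 3. If G has a minimum semitotal dominating set D containing a vertex x that has at least two witnesses in D (i.e., at least two other vertices of D at distance at most 2 from x), then ct_{γ_{t2}}(G) ≤ 2. -/
import Mathlib


open SimpleGraph

/-- `D` is a total dominating set of `G`: every vertex has a neighbour in `D`. -/
def IsTotalDomSet {V : Type*} (G : SimpleGraph V) (D : Set V) : Prop :=
  ∀ v : V, ∃ u ∈ D, G.Adj u v

/-- `x` and `y` are (distinct or not) at distance at most two:
adjacent or joined through a common neighbour. -/
def WithinTwo {V : Type*} (G : SimpleGraph V) (x y : V) : Prop :=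
  G.Adj x y ∨ ∃ z, G.Adj x z ∧ G.Adj z y

/-- `x` and `y` are at distance exactly two. -/
def DistTwo {V : Type*} (G : SimpleGraph V) (x y : V) : Prop :=
  x ≠ y ∧ ¬ G.Adj x y ∧ ∃ z, G.Adj x z ∧ G.Adj z y

/-- `D` is a semitotal dominating set of `G`: a dominating set in which every
vertex of `D` has another vertex of `D` within distance two (a witness). -/
def IsSemitotalDomSet {V : Type*} (G : SimpleGraph V) (D : Set V) : Prop :=
  (∀ v : V, v ∉ D → ∃ u ∈ D, G.Adj u v) ∧
  (∀ x ∈ D, ∃ y ∈ D, y ≠ x ∧ WithinTwo G x y)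

/-- The total domination number `γ_t`. -/
noncomputable def totalDomNum {V : Type*} (G : SimpleGraph V) [Fintype V] : ℕ :=
  sInf {n | ∃ D : Set V, IsTotalDomSet G D ∧ D.ncard = n}

/-- The semitotal domination number `γ_{t2}`. -/
noncomputable def semitotalDomNum {V : Type*} (G : SimpleGraph V) [Fintype V] : ℕ :=
  sInf {n | ∃ D : Set V, IsSemitotalDomSet G D ∧ D.ncard = n}

/-- The graph obtained from `G` by contracting the edge `xy`:
delete `y` and merge it into `x`. -/
def contractEdge {V : Type*} (G : SimpleGraph V) (x y : V) :
    SimpleGraph {v : V // v ≠ y} :=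
  SimpleGraph.fromRel (fun a b =>
    G.Adj a.1 b.1 ∨ (a.1 = x ∧ G.Adj y b.1) ∨ (b.1 = x ∧ G.Adj y a.1))

/-- A bundled finite simple graph. -/
structure FGraph : Type 1 where
  V : Type
  fin : Fintype V
  G : SimpleGraph V

attribute [instance] FGraph.fin

noncomputable def FGraph.tdn (A : FGraph) : ℕ := totalDomNum A.G

noncomputable def FGraph.stdn (A : FGraph) : ℕ := semitotalDomNum A.G

/-- `B` is obtained from `A` by contracting a single edge. -/
def FGraph.Contract (A B : FGraph) : Prop :=
  ∃ x y : A.V, A.G.Adj x y ∧ ∃ e : B.V ≃ {v : A.V // v ≠ y},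
    ∀ a b : B.V, B.G.Adj a b ↔ (contractEdge A.G x y).Adj (e a) (e b)

/-- `B` is obtained from `A` by a sequence of `n` edge contractions. -/
inductive ContractStar : ℕ → FGraph → FGraph → Prop
  | refl (A : FGraph) : ContractStar 0 A A
  | step {n : ℕ} {A B C : FGraph} : A.Contract B → ContractStar n B C →
      ContractStar (n + 1) A C

/-- At most `k` edge contractions suffice to decrease the total domination number by one. -/
def ctTDLe (A : FGraph) (k : ℕ) : Prop :=
  ∃ n ≤ k, ∃ B : FGraph, ContractStar n A B ∧ B.tdn = A.tdn - 1

/-- At most `k` edge contractions suffice to decrease the semitotal domination number by one. -/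
def ctSTLe (A : FGraph) (k : ℕ) : Prop :=
  ∃ n ≤ k, ∃ B : FGraph, ContractStar n A B ∧ B.stdn = A.stdn - 1

/-- `ct_{γ_t}`: the minimum number of edge contractions needed to decrease `γ_t` by one. -/
noncomputable def ctTDNum (A : FGraph) : ℕ :=
  sInf {n | ∃ B : FGraph, ContractStar n A B ∧ B.tdn = A.tdn - 1}

/-- `ct_{γ_{t2}}`: the minimum number of edge contractions needed to decrease `γ_{t2}` by one. -/
noncomputable def ctSTNum (A : FGraph) : ℕ :=
  sInf {n | ∃ B : FGraph, ContractStar n A B ∧ B.stdn = A.stdn - 1}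

/-- Disjoint union of two simple graphs. -/
def disjGraphUnion {α β : Type*} (G : SimpleGraph α) (H : SimpleGraph β) :
    SimpleGraph (α ⊕ β) :=
  SimpleGraph.fromRel (fun a b =>
    match a, b with
    | Sum.inl a, Sum.inl b => G.Adj a b
    | Sum.inr a, Sum.inr b => H.Adj a b
    | _, _ => False)

section AuxLemmas

variable {V : Type*} {G : SimpleGraph V} {x y c : V}

lemma contract_adj {a b : {v : V // v ≠ y}} :
    (contractEdge G x y).Adj a b ↔ a.1 ≠ b.1 ∧
      (G.Adj a.1 b.1 ∨ (a.1 = x ∧ G.Adj y b.1) ∨ (b.1 = x ∧ G.Adj y a.1)) := by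
  simp only [contractEdge, SimpleGraph.fromRel_adj]
  constructor
  · rintro ⟨hne, h | h⟩
    · exact ⟨fun h' => hne (Subtype.ext h'), h⟩
    · refine ⟨fun h' => hne (Subtype.ext h'), ?_⟩
      rcases h with h | h | h
      · exact Or.inl h.symm
      · exact Or.inr (Or.inr h)
      · exact Or.inr (Or.inl h)
  · rintro ⟨hne, h⟩
    exact ⟨fun h' => hne (congrArg Subtype.val h'), Or.inl h⟩

lemma adj_push {a b : {v : V // v ≠ y}} (h : G.Adj a.1 b.1) :
    (contractEdge G x y).Adj a b :=
  contract_adj.mpr ⟨h.ne, Or.inl h⟩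

lemma within_push (hxy : G.Adj x y) {a b : {v : V // v ≠ y}} (hne : a ≠ b)
    (h : WithinTwo G a.1 b.1) : WithinTwo (contractEdge G x y) a b := by
  have hne' : a.1 ≠ b.1 := fun h' => hne (Subtype.ext h')
  rcases h with h | ⟨d, h1, h2⟩
  · exact Or.inl (adj_push h)
  · by_cases hd : d = y
    · subst hd
      by_cases hax : a.1 = x
      · exact Or.inl (contract_adj.mpr ⟨hne', Or.inr (Or.inl ⟨hax, h2⟩)⟩)
      · by_cases hbx : b.1 = x
        · exact Or.inl (contract_adj.mpr ⟨hne', Or.inr (Or.inr ⟨hbx, h1.symm⟩)⟩)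
        · refine Or.inr ⟨⟨x, hxy.ne⟩, ?_, ?_⟩
          · exact contract_adj.mpr ⟨hax, Or.inr (Or.inr ⟨rfl, h1.symm⟩)⟩
          · exact contract_adj.mpr ⟨fun h' => hbx h'.symm, Or.inr (Or.inl ⟨rfl, h2⟩)⟩
    · exact Or.inr ⟨⟨d, hd⟩, adj_push h1, adj_push h2⟩

lemma merge_within (hxy : G.Adj x y) {a : {v : V // v ≠ y}} (hax : a.1 ≠ x)
    (h : WithinTwo G a.1 y) : WithinTwo (contractEdge G x y) a ⟨x, hxy.ne⟩ := by
  rcases h with h | ⟨d, h1, h2⟩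
  · exact Or.inl (contract_adj.mpr ⟨hax, Or.inr (Or.inr ⟨rfl, h.symm⟩)⟩)
  · by_cases hdx : d = x
    · exact Or.inl (contract_adj.mpr ⟨hax, Or.inl (hdx ▸ h1)⟩)
    · refine Or.inr ⟨⟨d, h2.ne⟩, adj_push h1, ?_⟩
      exact contract_adj.mpr ⟨hdx, Or.inr (Or.inr ⟨rfl, h2.symm⟩)⟩

lemma within_lift (hxy : G.Adj x y) {a b : {v : V // v ≠ y}}
    (h : WithinTwo (contractEdge G x y) a b) :
    WithinTwo G a.1 b.1 ∨ WithinTwo G a.1 x ∨ G.Adj a.1 y ∨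
      (b.1 = x ∧ WithinTwo G a.1 y) := by
  rcases h with h | ⟨d, h1, h2⟩
  · rcases (contract_adj.mp h).2 with h | h | h
    · exact Or.inl (Or.inl h)
    · exact Or.inl (Or.inr ⟨y, h.1 ▸ hxy, h.2⟩)
    · exact Or.inr (Or.inl (Or.inr ⟨y, h.2.symm, h.1 ▸ hxy.symm⟩))
  · rcases (contract_adj.mp h1).2 with h | h | h
    · rcases (contract_adj.mp h2).2 with h' | h' | h'
      · exact Or.inl (Or.inr ⟨d.1, h, h'⟩)
      · exact Or.inr (Or.inl (Or.inl (h'.1 ▸ h)))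
      · exact Or.inr (Or.inr (Or.inr ⟨h'.1, Or.inr ⟨d.1, h, h'.2.symm⟩⟩))
    · exact Or.inr (Or.inr (Or.inl (h.1 ▸ hxy)))
    · exact Or.inr (Or.inr (Or.inl h.2.symm))

lemma lift_semitotal [Finite V] (hxy : G.Adj x y) {D' : Set {v : V // v ≠ y}}
    (hD' : IsSemitotalDomSet (contractEdge G x y) D') :
    ∃ D : Set V, IsSemitotalDomSet G D ∧ D.ncard ≤ D'.ncard + 1 := by
  classical
  have hScard : (Subtype.val '' D').ncard = D'.ncard :=
    Set.ncard_image_of_injective _ Subtype.val_injective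
  set S : Set V := Subtype.val '' D' with hS
  by_cases hx : (⟨x, hxy.ne⟩ : {v : V // v ≠ y}) ∈ D'
  · refine ⟨insert y S, ⟨?_, ?_⟩, ?_⟩
    · intro v hv
      have hvy : v ≠ y := fun h => hv (h ▸ Set.mem_insert y S)
      have hvS : (⟨v, hvy⟩ : {v : V // v ≠ y}) ∉ D' :=
        fun h => hv (Set.mem_insert_of_mem _ ⟨_, h, rfl⟩)
      obtain ⟨u, huD, huv⟩ := hD'.1 _ hvS
      rcases (contract_adj.mp huv).2 with h | h | h
      · exact ⟨u.1, Set.mem_insert_of_mem _ ⟨u, huD, rfl⟩, h⟩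
      · exact ⟨y, Set.mem_insert y S, h.2⟩
      · exact ⟨y, Set.mem_insert y S, by have hvx : v = x := h.1; rw [hvx]; exact hxy.symm⟩
    · intro a ha
      rcases Set.mem_insert_iff.mp ha with rfl | haS
      · exact ⟨x, Set.mem_insert_of_mem _ ⟨_, hx, rfl⟩, hxy.ne, Or.inl hxy.symm⟩
      · obtain ⟨u, huD, rfl⟩ := haS
        obtain ⟨w, hwD, hwu, hwit⟩ := hD'.2 u huD
        rcases within_lift hxy hwit with h | h | h | h
        · exact ⟨w.1, Set.mem_insert_of_mem _ ⟨w, hwD, rfl⟩,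
            fun h' => hwu (Subtype.ext h'), h⟩
        · by_cases hux : u.1 = x
          · exact ⟨y, Set.mem_insert y S, Ne.symm u.2, by rw [hux]; exact Or.inl hxy⟩
          · exact ⟨x, Set.mem_insert_of_mem _ ⟨_, hx, rfl⟩, fun h' => hux h'.symm, h⟩
        · exact ⟨y, Set.mem_insert y S, Ne.symm u.2, Or.inl h⟩
        · exact ⟨y, Set.mem_insert y S, Ne.symm u.2, h.2⟩
    · calc (insert y S).ncard ≤ S.ncard + 1 := Set.ncard_insert_le y S
        _ = D'.ncard + 1 := by rw [hScard]
  · refine ⟨insert x S, ⟨?_, ?_⟩, ?_⟩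
    · intro v hv
      have hvx : v ≠ x := fun h => hv (h ▸ Set.mem_insert x S)
      by_cases hvy : v = y
      · exact ⟨x, Set.mem_insert x S, by rw [hvy]; exact hxy⟩
      · have hvS : (⟨v, hvy⟩ : {v : V // v ≠ y}) ∉ D' :=
          fun h => hv (Set.mem_insert_of_mem _ ⟨_, h, rfl⟩)
        obtain ⟨u, huD, huv⟩ := hD'.1 _ hvS
        rcases (contract_adj.mp huv).2 with h | h | h
        · exact ⟨u.1, Set.mem_insert_of_mem _ ⟨u, huD, rfl⟩, h⟩
        · exact absurd ((Subtype.ext h.1 : u = ⟨x, hxy.ne⟩) ▸ huD) hx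
        · exact absurd h.1 hvx
    · intro a ha
      rcases Set.mem_insert_iff.mp ha with rfl | haS
      · obtain ⟨u, huD, hux'⟩ := hD'.1 _ hx
        have hunx : u.1 ≠ a := fun h => hx ((Subtype.ext h : u = ⟨a, hxy.ne⟩) ▸ huD)
        rcases (contract_adj.mp hux').2 with h | h | h
        · exact ⟨u.1, Set.mem_insert_of_mem _ ⟨u, huD, rfl⟩, hunx, Or.inl h.symm⟩
        · exact absurd h.1 hunx
        · exact ⟨u.1, Set.mem_insert_of_mem _ ⟨u, huD, rfl⟩, hunx,
            Or.inr ⟨y, hxy, h.2⟩⟩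
      · obtain ⟨u, huD, rfl⟩ := haS
        have hux : u.1 ≠ x := fun h => hx ((Subtype.ext h : u = ⟨x, hxy.ne⟩) ▸ huD)
        obtain ⟨w, hwD, hwu, hwit⟩ := hD'.2 u huD
        rcases within_lift hxy hwit with h | h | h | h
        · exact ⟨w.1, Set.mem_insert_of_mem _ ⟨w, hwD, rfl⟩,
            fun h' => hwu (Subtype.ext h'), h⟩
        · exact ⟨x, Set.mem_insert x S, Ne.symm hux, h⟩
        · exact ⟨x, Set.mem_insert x S, Ne.symm hux, Or.inr ⟨y, h, hxy.symm⟩⟩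
        · exact absurd ((Subtype.ext h.1 : w = ⟨x, hxy.ne⟩) ▸ hwD) hx
    · calc (insert x S).ncard ≤ S.ncard + 1 := Set.ncard_insert_le x S
        _ = D'.ncard + 1 := by rw [hScard]

lemma workhorse [Finite V] {D : Set V}
    (hD : IsSemitotalDomSet G D) (hxc : G.Adj x c) (hx : x ∈ D) (hc : c ∈ D)
    (hw : ∃ w ∈ D, w ≠ c ∧ w ≠ x ∧ WithinTwo G x w) :
    ∃ D1 : Set {v : V // v ≠ c}, IsSemitotalDomSet (contractEdge G x c) D1 ∧
      D1.ncard + 1 = D.ncard := by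
  refine ⟨{v | v.1 ∈ D}, ⟨?_, ?_⟩, ?_⟩
  · intro v hv
    obtain ⟨u, huD, huv⟩ := hD.1 v.1 hv
    by_cases huc : u = c
    · refine ⟨⟨x, hxc.ne⟩, hx, ?_⟩
      exact contract_adj.mpr ⟨fun h => hv (by simp only [Set.mem_setOf_eq]; rw [← h]; exact hx), Or.inr (Or.inl ⟨rfl, huc ▸ huv⟩)⟩
    · exact ⟨⟨u, huc⟩, huD, adj_push huv⟩
  · intro a haD
    by_cases hax : a.1 = x
    · obtain ⟨w, hwD, hwc, hwx, hwit⟩ := hw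
      refine ⟨⟨w, hwc⟩, hwD, ?_, ?_⟩
      · exact fun h => hwx ((congrArg Subtype.val h).trans hax)
      · exact within_push hxc (fun h => hwx ((congrArg Subtype.val h.symm).trans hax))
          (by rw [hax]; exact hwit)
    · obtain ⟨w, hwD, hwa, hwit⟩ := hD.2 a.1 haD
      by_cases hwc : w = c
      · refine ⟨⟨x, hxc.ne⟩, hx, fun h => hax (congrArg Subtype.val h.symm), ?_⟩
        exact merge_within hxc hax (hwc ▸ hwit)
      · refine ⟨⟨w, hwc⟩, hwD, fun h => hwa (congrArg Subtype.val h), ?_⟩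
        exact within_push hxc (fun h => hwa (congrArg Subtype.val h).symm) hwit
  · have himg : Subtype.val '' {v : {v : V // v ≠ c} | v.1 ∈ D} = D \ {c} := by
      ext v
      constructor
      · rintro ⟨⟨v, hvc⟩, hvD, rfl⟩; exact ⟨hvD, hvc⟩
      · rintro ⟨hvD, hvc⟩; exact ⟨⟨v, hvc⟩, hvD, rfl⟩
    have h2 : ({v : {v : V // v ≠ c} | v.1 ∈ D}).ncard = (D \ {c}).ncard := by
      rw [← himg, Set.ncard_image_of_injective _ Subtype.val_injective]
    rw [h2]
    exact Set.ncard_diff_singleton_add_one hc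

lemma prep {D : Set V} (hD : IsSemitotalDomSet G D) (hxc : G.Adj x c) (hc : c ∉ D) :
    IsSemitotalDomSet (contractEdge G x c) {v : {v : V // v ≠ c} | v.1 ∈ D} ∧
      ({v : {v : V // v ≠ c} | v.1 ∈ D}).ncard = D.ncard := by
  refine ⟨⟨?_, ?_⟩, ?_⟩
  · intro v hv
    obtain ⟨u, huD, huv⟩ := hD.1 v.1 hv
    exact ⟨⟨u, fun h => hc (h ▸ huD)⟩, huD, adj_push huv⟩
  · intro a haD
    obtain ⟨w, hwD, hwa, hwit⟩ := hD.2 a.1 haD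
    refine ⟨⟨w, fun h => hc (h ▸ hwD)⟩, hwD, fun h => hwa (congrArg Subtype.val h), ?_⟩
    exact within_push hxc (fun h => hwa (congrArg Subtype.val h).symm) hwit
  · have himg : Subtype.val '' {v : {v : V // v ≠ c} | v.1 ∈ D} = D := by
      ext v
      constructor
      · rintro ⟨⟨v, hvc⟩, hvD, rfl⟩; exact hvD
      · intro hvD; exact ⟨⟨v, fun h => hc (h ▸ hvD)⟩, hvD, rfl⟩
    calc ({v : {v : V // v ≠ c} | v.1 ∈ D}).ncard
        = (Subtype.val '' {v : {v : V // v ≠ c} | v.1 ∈ D}).ncard :=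
          (Set.ncard_image_of_injective _ Subtype.val_injective).symm
      _ = D.ncard := by rw [himg]

end AuxLemmas

noncomputable def FGraph.contractAt (A : FGraph) (x y : A.V) : FGraph :=
  ⟨{v : A.V // v ≠ y}, Fintype.ofFinite _, contractEdge A.G x y⟩

lemma FGraph.contract_contractAt (A : FGraph) {x y : A.V} (h : A.G.Adj x y) :
    A.Contract (A.contractAt x y) :=
  ⟨x, y, h, Equiv.refl _, fun _ _ => Iff.rfl⟩

lemma FGraph.stdn_le (B : FGraph) {E : Set B.V} (h : IsSemitotalDomSet B.G E) :
    B.stdn ≤ E.ncard := Nat.sInf_le ⟨E, h, rfl⟩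

lemma stdn_lift (A : FGraph) (x y : A.V) (hxy : A.G.Adj x y)
    (hne : ∃ E : Set {v : A.V // v ≠ y}, IsSemitotalDomSet (contractEdge A.G x y) E) :
    A.stdn ≤ (A.contractAt x y).stdn + 1 := by
  have hset : {n | ∃ E : Set {v : A.V // v ≠ y},
      IsSemitotalDomSet (contractEdge A.G x y) E ∧ E.ncard = n}.Nonempty :=
    ⟨_, hne.choose, hne.choose_spec, rfl⟩
  have heq : (A.contractAt x y).stdn = sInf {n | ∃ E : Set {v : A.V // v ≠ y},
      IsSemitotalDomSet (contractEdge A.G x y) E ∧ E.ncard = n} := rfl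
  obtain ⟨E, hE, hEcard⟩ := Nat.sInf_mem hset
  obtain ⟨D, hDss, hDcard⟩ := lift_semitotal hxy hE
  have h1 : A.stdn ≤ D.ncard := Nat.sInf_le ⟨D, hDss, rfl⟩
  omega

lemma one_step (A : FGraph) {D : Set A.V} (hD : IsSemitotalDomSet A.G D)
    (hcard : D.ncard = A.stdn) {x c : A.V} (hxc : A.G.Adj x c)
    (hx : x ∈ D) (hc : c ∈ D)
    (hw : ∃ w ∈ D, w ≠ c ∧ w ≠ x ∧ WithinTwo A.G x w) :
    ∃ B : FGraph, A.Contract B ∧ B.stdn = A.stdn - 1 := by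
  obtain ⟨D1, hD1, hD1card⟩ := workhorse hD hxc hx hc hw
  refine ⟨A.contractAt x c, A.contract_contractAt hxc, ?_⟩
  have h1 : (A.contractAt x c).stdn ≤ D1.ncard := (A.contractAt x c).stdn_le hD1
  have h2 : A.stdn ≤ (A.contractAt x c).stdn + 1 := stdn_lift A x c hxc ⟨D1, hD1⟩
  omega

/-- If `γ_{t2}(G) ≥ 3` and some minimum semitotal dominating set of `G` contains a
vertex `x` with at least two witnesses, then `ct_{γ_{t2}}(G) ≤ 2`. -/
theorem stmt2 (A : FGraph) (h3 : 3 ≤ A.stdn)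
    (hD : ∃ D : Set A.V, IsSemitotalDomSet A.G D ∧ D.ncard = A.stdn ∧
      ∃ x ∈ D, ∃ y ∈ D, ∃ z ∈ D, y ≠ z ∧ y ≠ x ∧ z ≠ x ∧
        WithinTwo A.G x y ∧ WithinTwo A.G x z) :
    ctSTLe A 2 := by
  classical
  obtain ⟨D, hDss, hcard, x, hxD, y, hyD, z, hzD, hyz, hyx, hzx, hxy2, hxz2⟩ := hD
  rcases hxy2 with hadj | ⟨c, h1, h2⟩
  · obtain ⟨B, hAB, hB⟩ := one_step A hDss hcard hadj hxD hyD
      ⟨z, hzD, fun h => hyz h.symm, hzx, hxz2⟩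
    exact ⟨1, by norm_num, B, ContractStar.step hAB (ContractStar.refl B), hB⟩
  · by_cases hcD : c ∈ D
    · have hw : ∃ w ∈ D, w ≠ c ∧ w ≠ x ∧ WithinTwo A.G x w := by
        by_cases hyc : y = c
        · exact ⟨z, hzD, fun h => hyz (hyc.trans h.symm), hzx, hxz2⟩
        · exact ⟨y, hyD, hyc, hyx, Or.inr ⟨c, h1, h2⟩⟩
      obtain ⟨B, hAB, hB⟩ := one_step A hDss hcard h1 hxD hcD hw
      exact ⟨1, by norm_num, B, ContractStar.step hAB (ContractStar.refl B), hB⟩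
    · have hyc : y ≠ c := fun h => hcD (h ▸ hyD)
      have hzc : z ≠ c := fun h => hcD (h ▸ hzD)
      obtain ⟨hD1, hD1card⟩ := prep hDss h1 hcD
      set B1 := A.contractAt x c with hB1def
      set x1 : {v : A.V // v ≠ c} := ⟨x, h1.ne⟩ with hx1def
      set y1 : {v : A.V // v ≠ c} := ⟨y, hyc⟩ with hy1def
      set z1 : {v : A.V // v ≠ c} := ⟨z, hzc⟩ with hz1def
      have hx1y1 : (contractEdge A.G x c).Adj x1 y1 :=
        contract_adj.mpr ⟨fun h => hyx h.symm, Or.inr (Or.inl ⟨rfl, h2⟩)⟩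
      have hx1z1 : WithinTwo (contractEdge A.G x c) x1 z1 :=
        within_push h1 (fun h => hzx (congrArg Subtype.val h).symm) hxz2
      obtain ⟨D2, hD2, hD2card⟩ := workhorse (G := contractEdge A.G x c) hD1 hx1y1
        (show x1 ∈ _ from hxD) (show y1 ∈ _ from hyD)
        ⟨z1, hzD, fun h => hyz (congrArg Subtype.val h).symm,
          fun h => hzx (congrArg Subtype.val h), hx1z1⟩
      set B2 := B1.contractAt x1 y1 with hB2def
      have hAB1 : A.Contract B1 := A.contract_contractAt h1
      have hB1B2 : B1.Contract B2 := B1.contract_contractAt hx1y1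
      have hstdn2 : B2.stdn ≤ D2.ncard := B2.stdn_le hD2
      have hb1le : B1.stdn ≤ ({v : {v : A.V // v ≠ c} | v.1 ∈ D}).ncard := B1.stdn_le hD1
      have hl1 : A.stdn ≤ B1.stdn + 1 := stdn_lift A x c h1 ⟨_, hD1⟩
      have hl2 : B1.stdn ≤ B2.stdn + 1 := stdn_lift B1 x1 y1 hx1y1 ⟨D2, hD2⟩
      rcases Nat.lt_or_ge B1.stdn A.stdn with hlt | hge
      · exact ⟨1, by norm_num, B1, ContractStar.step hAB1 (ContractStar.refl B1), by omega⟩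
      · exact ⟨2, le_refl 2, B2,
          ContractStar.step hAB1 (ContractStar.step hB1B2 (ContractStar.refl B2)), by omega⟩
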